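/- Let k be a nonnegative integer and let f : ℝ → ℝ be k-times continuously differentiable. Then for every z ∈ ℝ, the k-th derivative at z of the function z ↦ exp(f(z)) equals exp(f(z)) · Σ_{l=0}^{k} (1/l!) · Σ_{j=0}^{l} (-1)^j · C(l,j) · f(z)^j · D^k[f^{l-j}](z), where D^k[f^{l-j}](z) denotes the k-th derivative at z of the function z ↦ f(z)^{l-j}. -/

import Mathlib

open Finset

private lemma itd_zero_fun (n : ℕ) : iteratedDeriv n (fun _ : ℝ => (0:ℝ)) = fun _ => (0:ℝ) := by
  induction n with
  | zero => simp [iteratedDeriv_zero]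
  | succ n ih => rw [iteratedDeriv_succ', deriv_const']; exact ih

private lemma itd_add {n : ℕ} {f g : ℝ → ℝ} (hf : ContDiff ℝ n f) (hg : ContDiff ℝ n g) (x : ℝ) :
    iteratedDeriv n (fun z => f z + g z) x = iteratedDeriv n f x + iteratedDeriv n g x := by
  simp only [← iteratedDerivWithin_univ]
  exact iteratedDerivWithin_add (Set.mem_univ x) uniqueDiffOn_univ hf.contDiffWithinAt hg.contDiffWithinAt

private lemma itd_cmul {n : ℕ} {f : ℝ → ℝ} (hf : ContDiff ℝ n f) (c x : ℝ) :
    iteratedDeriv n (fun z => c * f z) x = c * iteratedDeriv n f x := by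
  simp only [← iteratedDerivWithin_univ]
  exact iteratedDerivWithin_const_mul (Set.mem_univ x) uniqueDiffOn_univ c hf.contDiffWithinAt

private lemma itd_sum {ι : Type*} (s : Finset ι) (F : ι → ℝ → ℝ) {n : ℕ}
    (h : ∀ i ∈ s, ContDiff ℝ n (F i)) (x : ℝ) :
    iteratedDeriv n (fun z => ∑ i ∈ s, F i z) x = ∑ i ∈ s, iteratedDeriv n (F i) x := by
  classical
  induction s using Finset.induction with
  | empty => simp [itd_zero_fun]
  | @insert a s ha ih =>
    simp only [Finset.sum_insert ha]
    rw [itd_add (h a (Finset.mem_insert_self a s))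
      (ContDiff.sum fun i hi => h i (Finset.mem_insert_of_mem hi)),
      ih fun i hi => h i (Finset.mem_insert_of_mem hi)]

private lemma mulVanish (z : ℝ) : ∀ (j : ℕ) (u v : ℝ → ℝ), ContDiff ℝ j u → ContDiff ℝ j v →
    (∀ i ≤ j, iteratedDeriv i u z = 0) → iteratedDeriv j (fun x => u x * v x) z = 0 := by
  intro j
  induction j with
  | zero =>
    intro u v _ _ h0
    have := h0 0 le_rfl
    simp only [iteratedDeriv_zero] at this ⊢
    rw [this, zero_mul]
  | succ j IH =>
    intro u v hu hv h0
    have hu' : ContDiff ℝ ((j : WithTop ℕ∞) + 1) u := by exact_mod_cast hu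
    have hv' : ContDiff ℝ ((j : WithTop ℕ∞) + 1) v := by exact_mod_cast hv
    have hud : Differentiable ℝ u := hu'.one_of_succ.differentiable one_ne_zero
    have hvd : Differentiable ℝ v := hv'.one_of_succ.differentiable one_ne_zero
    have hu1 : ContDiff ℝ j (deriv u) := (contDiff_succ_iff_deriv.mp hu').2.2
    have hv1 : ContDiff ℝ j (deriv v) := (contDiff_succ_iff_deriv.mp hv').2.2
    rw [iteratedDeriv_succ']
    have hder : deriv (fun x => u x * v x) = fun x => deriv u x * v x + u x * deriv v x :=
      funext fun x => deriv_mul (hud x) (hvd x)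
    rw [hder, itd_add (hu1.mul hv'.of_succ) (hu'.of_succ.mul hv1),
      IH (deriv u) v hu1 hv'.of_succ (fun i hi => by
        rw [show iteratedDeriv i (deriv u) = iteratedDeriv (i+1) u from
          (iteratedDeriv_succ' ..).symm]
        exact h0 (i+1) (Nat.succ_le_succ hi)),
      IH u (deriv v) hu'.of_succ hv1 (fun i hi => h0 i (hi.trans (Nat.le_succ j))), add_zero]

private lemma compVanish (z : ℝ) : ∀ (j : ℕ) (ψ g : ℝ → ℝ), (∀ n : ℕ, ContDiff ℝ n ψ) →
    ContDiff ℝ j g → g z = 0 → (∀ i ≤ j, iteratedDeriv i ψ 0 = 0) →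
    iteratedDeriv j (fun x => ψ (g x)) z = 0 := by
  have cd_deriv : ∀ {ψ : ℝ → ℝ}, (∀ n : ℕ, ContDiff ℝ n ψ) → ∀ n : ℕ, ContDiff ℝ n (deriv ψ) := by
    intro ψ hψ n
    have h' : ContDiff ℝ ((n : WithTop ℕ∞) + 1) ψ := by exact_mod_cast hψ (n+1)
    exact (contDiff_succ_iff_deriv.mp h').2.2
  have main : ∀ j : ℕ, ∀ i ≤ j, ∀ ψ g : ℝ → ℝ, (∀ n : ℕ, ContDiff ℝ n ψ) →
      ContDiff ℝ i g → g z = 0 → (∀ l ≤ i, iteratedDeriv l ψ 0 = 0) →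
      iteratedDeriv i (fun x => ψ (g x)) z = 0 := by
    intro j
    induction j with
    | zero =>
      intro i hi ψ g hψ hg hgz h0
      interval_cases i
      have := h0 0 le_rfl
      simp only [iteratedDeriv_zero] at this ⊢
      rw [hgz, this]
    | succ j IH =>
      intro i hi ψ g hψ hg hgz h0
      rcases Nat.lt_succ_iff_lt_or_eq.mp (Nat.lt_succ_of_le hi) with h | rfl
      · exact IH i (Nat.lt_succ_iff.mp h) ψ g hψ hg hgz h0
      · have hg' : ContDiff ℝ ((j : WithTop ℕ∞) + 1) g := by exact_mod_cast hg
        have hgd : Differentiable ℝ g := hg'.one_of_succ.differentiable one_ne_zero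
        have hψd : Differentiable ℝ ψ := (hψ 1).differentiable (by norm_cast)
        rw [iteratedDeriv_succ']
        have hder : deriv (fun x => ψ (g x)) = fun x => deriv ψ (g x) * deriv g x :=
          funext fun x => deriv_comp x (hψd (g x)) (hgd x)
        rw [hder]
        refine mulVanish z j (fun x => deriv ψ (g x)) (deriv g)
          ((cd_deriv hψ j).comp hg'.of_succ) ((contDiff_succ_iff_deriv.mp hg').2.2) ?_
        intro l hl
        refine IH l hl (deriv ψ) g (cd_deriv hψ) (hg'.of_succ.of_le ?_) hgz ?_
        · exact_mod_cast hl
        · intro m hm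
          rw [show iteratedDeriv m (deriv ψ) = iteratedDeriv (m+1) ψ from
            (iteratedDeriv_succ' ..).symm]
          exact h0 (m+1) (Nat.succ_le_succ (hm.trans hl))
  exact fun j => main j j le_rfl

/-- The Taylor remainder of `exp` of order `m`. -/
private noncomputable def Efn (m : ℕ) : ℝ → ℝ :=
  fun x => Real.exp x - ∑ l ∈ Finset.range m, x ^ l / l.factorial

private lemma Efn_contDiff (m n : ℕ) : ContDiff ℝ n (Efn m) :=
  Real.contDiff_exp.sub (ContDiff.sum fun l _ => (contDiff_id.pow l).div_const _)

private lemma Efn_hasDeriv (m : ℕ) (x : ℝ) : HasDerivAt (Efn (m+1)) (Efn m x) x := by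
  have h2 : HasDerivAt (fun x : ℝ => ∑ l ∈ Finset.range (m+1), x ^ l / l.factorial)
      (∑ l ∈ Finset.range (m+1), (l : ℝ) * x ^ (l-1) / l.factorial) x :=
    HasDerivAt.fun_sum fun l _ => (hasDerivAt_pow l x).div_const _
  have h3 : ∑ l ∈ Finset.range (m+1), (l : ℝ) * x ^ (l-1) / l.factorial
      = ∑ l ∈ Finset.range m, x ^ l / l.factorial := by
    rw [Finset.sum_range_succ']
    simp only [Nat.cast_zero, zero_mul, zero_div, add_zero]
    refine Finset.sum_congr rfl fun i _ => ?_
    rw [Nat.factorial_succ]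
    push_cast
    rw [mul_div_mul_left _ _ (by positivity : ((i:ℝ) + 1) ≠ 0)]
  rw [h3] at h2
  exact (Real.hasDerivAt_exp x).sub h2

private lemma Efn_deriv (m : ℕ) : deriv (Efn (m+1)) = Efn m :=
  funext fun x => (Efn_hasDeriv m x).deriv

private lemma Efn_iter (i : ℕ) : ∀ m, iteratedDeriv i (Efn (m + i)) = Efn m := by
  induction i with
  | zero => intro m; simp [iteratedDeriv_zero]
  | succ i IH =>
    intro m
    rw [iteratedDeriv_succ', show m + (i+1) = (m + i) + 1 from rfl, Efn_deriv, IH]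

private lemma Efn_vanish (k : ℕ) : ∀ i ≤ k, iteratedDeriv i (Efn (k+1)) 0 = 0 := by
  intro i hi
  have h1 : k + 1 = (k + 1 - i) + i := by omega
  rw [h1, Efn_iter]
  obtain ⟨m, hm⟩ : ∃ m, k + 1 - i = m + 1 := ⟨k - i, by omega⟩
  rw [hm]
  simp [Efn, Finset.sum_range_succ']

/-- The higher-order derivative formula for `exp(f(z))` used in
Appendix B of the paper: for `f` k-times continuously differentiable,
`D^k[exp ∘ f](z) = exp(f(z)) Σ_{l=0}^{k} (1/l!) Σ_{j=0}^{l} (-1)^j C(l,j) f(z)^j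
 D^k[f^{l-j}](z)`. -/
theorem stmt_19 (k : ℕ) (f : ℝ → ℝ) (hf : ContDiff ℝ k f) (z : ℝ) :
    iteratedDeriv k (fun z : ℝ => Real.exp (f z)) z
      = Real.exp (f z) *
          ∑ l ∈ Finset.range (k + 1), (1 / (l.factorial : ℝ)) *
            ∑ j ∈ Finset.range (l + 1),
              (-1 : ℝ) ^ j * (l.choose j : ℝ) * (f z) ^ j *
                iteratedDeriv k (fun z : ℝ => (f z) ^ (l - j)) z := by
  classical
  set c := f z with hc
  have hg : ContDiff ℝ k (fun w => f w - c) := hf.sub contDiff_const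
  have hgl : ∀ l : ℕ, ContDiff ℝ k (fun w : ℝ => (f w - c) ^ l) := fun l => hg.pow l
  have key : (fun w : ℝ => Real.exp (f w)) =
      fun w => (∑ l ∈ Finset.range (k+1), (Real.exp c / l.factorial) * (f w - c) ^ l)
        + Real.exp c * Efn (k+1) (f w - c) := by
    funext w
    have h1 : ∑ l ∈ Finset.range (k+1), (Real.exp c / (l.factorial:ℝ)) * (f w - c) ^ l
        = Real.exp c * ∑ l ∈ Finset.range (k+1), (f w - c) ^ l / l.factorial := by
      rw [Finset.mul_sum]; exact Finset.sum_congr rfl fun l _ => by ring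
    have h2 : Efn (k+1) (f w - c)
        = Real.exp (f w - c) - ∑ l ∈ Finset.range (k+1), (f w - c) ^ l / l.factorial := rfl
    rw [h1, h2, show Real.exp (f w) = Real.exp c * Real.exp (f w - c) from by
      rw [← Real.exp_add]; ring_nf]
    ring
  have hcomp : ContDiff ℝ k (fun w : ℝ => Efn (k+1) (f w - c)) := (Efn_contDiff (k+1) k).comp hg
  have hsum : ContDiff ℝ k
      (fun w : ℝ => ∑ l ∈ Finset.range (k+1), (Real.exp c / l.factorial) * (f w - c) ^ l) :=
    ContDiff.sum fun l _ => contDiff_const.mul (hgl l)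
  rw [key, itd_add hsum (contDiff_const.mul hcomp) z, itd_cmul hcomp (Real.exp c) z,
    compVanish z k (Efn (k+1)) (fun w => f w - c) (Efn_contDiff (k+1)) hg (by simp [hc]) (Efn_vanish k),
    mul_zero, add_zero,
    itd_sum (Finset.range (k+1)) (fun l w => (Real.exp c / l.factorial) * (f w - c) ^ l)
      (fun l _ => contDiff_const.mul (hgl l)) z,
    Finset.mul_sum]
  refine Finset.sum_congr rfl fun l hl => ?_
  rw [itd_cmul (hgl l) _ z]
  have hbin : (fun w : ℝ => (f w - c) ^ l)
      = fun w => ∑ j ∈ Finset.range (l+1), ((-1:ℝ)^j * (l.choose j : ℝ) * c ^ j) * (f w) ^ (l-j) := by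
    funext w
    rw [show f w - c = -c + f w from by ring, add_pow]
    exact Finset.sum_congr rfl fun j hj => by rw [neg_pow]; ring
  rw [hbin, itd_sum (Finset.range (l+1))
    (fun j w => ((-1:ℝ)^j * (l.choose j : ℝ) * c ^ j) * (f w) ^ (l-j))
    (fun j _ => contDiff_const.mul (hf.pow (l-j))) z,
    Finset.sum_congr rfl (fun j (hj : j ∈ Finset.range (l+1)) =>
      itd_cmul (hf.pow (l-j)) ((-1:ℝ)^j * (l.choose j : ℝ) * c ^ j) z),
    Finset.mul_sum, Finset.mul_sum, Finset.mul_sum]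
  refine Finset.sum_congr rfl fun j hj => ?_
  ring
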